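/- Let 𝔤_1, 𝔤_2 be real Lie algebras with complexifications 𝔤_i^ℂ, and suppose for i = 1,2 that 𝔩_i ⊆ 𝔩_i' = 𝔩_i ⊕ ⟨ξ_i⟩_ℂ are complex subalgebras of 𝔤_i^ℂ defining left-invariant nacs on compact Lie groups K_i (so 𝔩_i ∩ 𝔨_i = 0, ξ_i ∈ 𝔨_i, [𝔩_i, 𝔩_i'] ⊆ 𝔩_i, and 𝔤_i^ℂ = 𝔩_i ⊕ conj(𝔩_i) ⊕ ⟨ξ_i⟩_ℂ). Then 𝔩 := 𝔩_1 ⊕ 𝔩_2 ⊕ ⟨ξ_1 + i ξ_2⟩_ℂ is a complex subalgebra of 𝔤_1^ℂ ⊕ 𝔤_2^ℂ with 𝔩 ∩ (𝔨_1 ⊕ 𝔨_2) = 0, defining a left-invariant complex structure on K_1 × K_2. -/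
import Mathlib


/-- Let `𝔤ᵢ^ℂ` (i = 1,2) be the complexifications of the Lie algebras of
compact Lie groups `Kᵢ`, with conjugations `σᵢ` (fixed sets `𝔨ᵢ`), and suppose
`𝔩ᵢ ⊆ 𝔩ᵢ' = 𝔩ᵢ ⊕ ⟨ξᵢ⟩_ℂ` define left-invariant nacs on `Kᵢ`: so `𝔩ᵢ ∩ 𝔨ᵢ = 0`,
`ξᵢ ∈ 𝔨ᵢ`, `[𝔩ᵢ, 𝔩ᵢ'] ⊆ 𝔩ᵢ`, and `𝔤ᵢ^ℂ = 𝔩ᵢ ⊕ conj(𝔩ᵢ) ⊕ ⟨ξᵢ⟩_ℂ`. Then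
`𝔩 := 𝔩₁ ⊕ 𝔩₂ ⊕ ⟨ξ₁ + i ξ₂⟩_ℂ` is a complex Lie subalgebra of `𝔤₁^ℂ ⊕ 𝔤₂^ℂ`
(a subspace closed under the componentwise bracket) with `𝔩 ∩ (𝔨₁ ⊕ 𝔨₂) = 0`, hence
defines a left-invariant complex structure on `K₁ × K₂`. -/

private lemma stmt17_aux {g : Type*} [LieRing g] [LieAlgebra ℂ g]
    (𝔩 : LieSubalgebra ℂ g) (ξ : g) (hid : ∀ x ∈ 𝔩, ⁅ξ, x⁆ ∈ 𝔩)
    {a b : g} (ha : a ∈ 𝔩) (hb : b ∈ 𝔩) (c d : ℂ) :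
    ⁅a + c • ξ, b + d • ξ⁆ ∈ 𝔩 := by
  have h2 : ⁅a, ξ⁆ ∈ 𝔩 := by rw [← lie_skew]; exact neg_mem (hid a ha)
  simp only [add_lie, lie_add, smul_lie, lie_smul, lie_self, smul_zero, add_zero]
  refine add_mem (add_mem ?_ ?_) ?_ <;>
    first
      | exact 𝔩.lie_mem ha hb
      | exact 𝔩.smul_mem _ h2
      | exact 𝔩.smul_mem _ (hid b hb)

theorem stmt17 {g1 g2 : Type*}
    [LieRing g1] [LieAlgebra ℂ g1] [LieRing g2] [LieAlgebra ℂ g2]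
    (σ1 : g1 → g1) (σ2 : g2 → g2)
    (hadd1 : ∀ x y, σ1 (x + y) = σ1 x + σ1 y)
    (hsmul1 : ∀ (c : ℂ) (x : g1), σ1 (c • x) = (starRingEnd ℂ) c • σ1 x)
    (hinv1 : ∀ x, σ1 (σ1 x) = x) (hbr1 : ∀ x y, σ1 ⁅x, y⁆ = ⁅σ1 x, σ1 y⁆)
    (hadd2 : ∀ x y, σ2 (x + y) = σ2 x + σ2 y)
    (hsmul2 : ∀ (c : ℂ) (x : g2), σ2 (c • x) = (starRingEnd ℂ) c • σ2 x)
    (hinv2 : ∀ x, σ2 (σ2 x) = x) (hbr2 : ∀ x y, σ2 ⁅x, y⁆ = ⁅σ2 x, σ2 y⁆)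
    (𝔩1 : LieSubalgebra ℂ g1) (𝔩2 : LieSubalgebra ℂ g2)
    (ξ1 : g1) (ξ2 : g2)
    -- ξᵢ ∈ 𝔨ᵢ
    (hξ1 : σ1 ξ1 = ξ1) (hξ2 : σ2 ξ2 = ξ2)
    -- 𝔩ᵢ ∩ 𝔨ᵢ = 0
    (h𝔩1𝔨 : ∀ x ∈ 𝔩1, σ1 x = x → x = 0) (h𝔩2𝔨 : ∀ x ∈ 𝔩2, σ2 x = x → x = 0)
    -- [𝔩ᵢ, 𝔩ᵢ'] ⊆ 𝔩ᵢ, i.e. 𝔩ᵢ is an ideal of 𝔩ᵢ' = 𝔩ᵢ ⊕ ⟨ξᵢ⟩_ℂ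
    (hid1 : ∀ x ∈ 𝔩1, ⁅ξ1, x⁆ ∈ 𝔩1) (hid2 : ∀ x ∈ 𝔩2, ⁅ξ2, x⁆ ∈ 𝔩2)
    -- 𝔤ᵢ^ℂ = 𝔩ᵢ ⊕ conj(𝔩ᵢ) ⊕ ⟨ξᵢ⟩_ℂ
    (hdec1 : ∀ x : g1, ∃! t : 𝔩1 × 𝔩1 × ℂ, x = ↑t.1 + σ1 ↑t.2.1 + t.2.2 • ξ1)
    (hdec2 : ∀ x : g2, ∃! t : 𝔩2 × 𝔩2 × ℂ, x = ↑t.1 + σ2 ↑t.2.1 + t.2.2 • ξ2) :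
    ∃ 𝔩 : Submodule ℂ (g1 × g2),
      𝔩 = (𝔩1.toSubmodule.prod 𝔩2.toSubmodule) ⊔
            Submodule.span ℂ {(ξ1, Complex.I • ξ2)} ∧
      (∀ x ∈ 𝔩, ∀ y ∈ 𝔩, ((⁅Prod.fst x, Prod.fst y⁆ : g1),
        (⁅Prod.snd x, Prod.snd y⁆ : g2)) ∈ 𝔩) ∧
      (∀ x ∈ 𝔩, σ1 (Prod.fst x) = Prod.fst x → σ2 (Prod.snd x) = Prod.snd x →
        x = (0 : g1 × g2)) := by
  refine ⟨_, rfl, ?_, ?_⟩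
  · rintro x hx y hy
    rw [Submodule.mem_sup] at hx hy
    obtain ⟨⟨a1, a2⟩, ha, s, hs, rfl⟩ := hx
    obtain ⟨⟨b1, b2⟩, hb, t, ht, rfl⟩ := hy
    rw [Submodule.mem_span_singleton] at hs ht
    obtain ⟨c, rfl⟩ := hs
    obtain ⟨d, rfl⟩ := ht
    apply Submodule.mem_sup_left
    refine Submodule.mem_prod.mpr ⟨?_, ?_⟩
    · show ⁅((a1, a2) + c • (ξ1, Complex.I • ξ2)).1,
        ((b1, b2) + d • (ξ1, Complex.I • ξ2)).1⁆ ∈ 𝔩1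
      have e1 : ((a1, a2) + c • (ξ1, Complex.I • ξ2)).1 = a1 + c • ξ1 := rfl
      have e2 : ((b1, b2) + d • (ξ1, Complex.I • ξ2)).1 = b1 + d • ξ1 := rfl
      rw [e1, e2]
      exact stmt17_aux 𝔩1 ξ1 hid1 ha.1 hb.1 c d
    · show ⁅((a1, a2) + c • (ξ1, Complex.I • ξ2)).2,
        ((b1, b2) + d • (ξ1, Complex.I • ξ2)).2⁆ ∈ 𝔩2
      have e1 : ((a1, a2) + c • (ξ1, Complex.I • ξ2)).2
          = a2 + (c * Complex.I) • ξ2 := by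
        show a2 + c • Complex.I • ξ2 = _
        rw [smul_smul]
      have e2 : ((b1, b2) + d • (ξ1, Complex.I • ξ2)).2
          = b2 + (d * Complex.I) • ξ2 := by
        show b2 + d • Complex.I • ξ2 = _
        rw [smul_smul]
      rw [e1, e2]
      exact stmt17_aux 𝔩2 ξ2 hid2 ha.2 hb.2 _ _
  · rintro x hx h1 h2
    rw [Submodule.mem_sup] at hx
    obtain ⟨⟨a1, a2⟩, ha, s, hs, rfl⟩ := hx
    rw [Submodule.mem_span_singleton] at hs
    obtain ⟨c, rfl⟩ := hs
    have hσ10 : σ1 (0 : g1) = 0 := by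
      have := hsmul1 0 0; simpa using this
    have hσ20 : σ2 (0 : g2) = 0 := by
      have := hsmul2 0 0; simpa using this
    have hx1 : ((a1, a2) + c • (ξ1, Complex.I • ξ2)).1 = a1 + c • ξ1 := rfl
    have hx2 : ((a1, a2) + c • (ξ1, Complex.I • ξ2)).2
        = a2 + (c * Complex.I) • ξ2 := by
      show a2 + c • Complex.I • ξ2 = _
      rw [smul_smul]
    rw [hx1] at h1
    rw [hx2] at h2
    -- analysis on the first component
    obtain ⟨t1, ht1, hu1⟩ := hdec1 (a1 + c • ξ1)
    have e1 : a1 + c • ξ1 = ↑((⟨a1, ha.1⟩ : 𝔩1), (⟨0, Submodule.zero_mem _⟩ : 𝔩1),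
        c).1 + σ1 ↑((⟨a1, ha.1⟩ : 𝔩1), (⟨0, Submodule.zero_mem _⟩ : 𝔩1), c).2.1 +
        ((⟨a1, ha.1⟩ : 𝔩1), (⟨0, Submodule.zero_mem _⟩ : 𝔩1), c).2.2 • ξ1 := by
      simp [hσ10]
    have e2 : a1 + c • ξ1 = ↑(((0 : 𝔩1), (⟨a1, ha.1⟩ : 𝔩1),
        (starRingEnd ℂ) c)).1 + σ1 ↑(((0 : 𝔩1), (⟨a1, ha.1⟩ : 𝔩1),
        (starRingEnd ℂ) c)).2.1 + (((0 : 𝔩1), (⟨a1, ha.1⟩ : 𝔩1),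
        (starRingEnd ℂ) c)).2.2 • ξ1 := by
      conv_lhs => rw [← h1]
      rw [hadd1, hsmul1, hξ1]
      simp
    have key1 := (hu1 _ e1).trans (hu1 _ e2).symm
    have ha1 : a1 = 0 := by
      have := congrArg (fun p => (p.1 : g1)) key1; simpa using this
    have hc1 : c = (starRingEnd ℂ) c := congrArg (fun p => p.2.2) key1
    -- second component
    obtain ⟨t2, ht2, hu2⟩ := hdec2 (a2 + (c * Complex.I) • ξ2)
    have f1 : a2 + (c * Complex.I) • ξ2 = ↑((⟨a2, ha.2⟩ : 𝔩2),
        (⟨0, Submodule.zero_mem _⟩ : 𝔩2), c * Complex.I).1 +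
        σ2 ↑((⟨a2, ha.2⟩ : 𝔩2), (⟨0, Submodule.zero_mem _⟩ : 𝔩2),
        c * Complex.I).2.1 + ((⟨a2, ha.2⟩ : 𝔩2),
        (⟨0, Submodule.zero_mem _⟩ : 𝔩2), c * Complex.I).2.2 • ξ2 := by
      simp [hσ20]
    have f2 : a2 + (c * Complex.I) • ξ2 = ↑(((0 : 𝔩2), (⟨a2, ha.2⟩ : 𝔩2),
        (starRingEnd ℂ) (c * Complex.I))).1 + σ2 ↑(((0 : 𝔩2),
        (⟨a2, ha.2⟩ : 𝔩2), (starRingEnd ℂ) (c * Complex.I))).2.1 +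
        (((0 : 𝔩2), (⟨a2, ha.2⟩ : 𝔩2),
        (starRingEnd ℂ) (c * Complex.I))).2.2 • ξ2 := by
      conv_lhs => rw [← h2]
      rw [hadd2, hsmul2, hξ2]
      simp
    have key2 := (hu2 _ f1).trans (hu2 _ f2).symm
    have ha2 : a2 = 0 := by
      have := congrArg (fun p => (p.1 : g2)) key2; simpa using this
    have hc2 : c * Complex.I = (starRingEnd ℂ) (c * Complex.I) :=
      congrArg (fun p => p.2.2) key2
    have hc0 : c = 0 := by
      rw [map_mul, ← hc1, Complex.conj_I] at hc2
      have hz : c * Complex.I = 0 := by linear_combination hc2 / 2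
      rcases mul_eq_zero.mp hz with h | h
      · exact h
      · exact absurd h Complex.I_ne_zero
    subst ha1; subst ha2; subst hc0
    simp
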